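/- Let p, r ≥ 1 and let Y^1, …, Y^r be real symmetric p×p positive semidefinite matrices such that trace(Y^t) = 1 and rank(Y^t) = 1 for every t ∈ {1,…,r}. Then ∑_{t=1}^r Y^t ⪯ I if and only if ⟨Y^t, Y^{t'}⟩ = 0 for all t, t' ∈ {1,…,r} with t ≠ t'. -/

import Mathlib

open Matrix

namespace Prop1Aux

open scoped MatrixOrder

variable {n : Type*} [Fintype n] [DecidableEq n]

lemma psd_trace_nonneg {A : Matrix n n ℝ} (hA : A.PosSemidef) : 0 ≤ A.trace := by
  rw [Matrix.trace]
  refine Finset.sum_nonneg fun i _ => ?_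
  have := hA.dotProduct_mulVec_nonneg (Pi.single i 1)
  simpa [dotProduct, Matrix.mulVec, Pi.single_apply] using this

lemma trace_mul_nonneg {A B : Matrix n n ℝ} (hA : A.PosSemidef) (hB : B.PosSemidef) :
    0 ≤ (A * B).trace := by
  obtain ⟨C, rfl⟩ : ∃ C : Matrix n n ℝ, A = Cᴴ * C := CStarAlgebra.nonneg_iff_eq_star_mul_self.mp hA.nonneg
  rw [Matrix.mul_assoc, Matrix.trace_mul_comm]
  exact psd_trace_nonneg (hB.mul_mul_conjTranspose_same C)

lemma eq_zero_of_trace_ct_mul_self {m : Type*} [Fintype m] {M : Matrix m n ℝ}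
    (h : (Mᴴ * M).trace = 0) : M = 0 := by
  have h2 : ∑ j, ∑ i, M i j * M i j = 0 := by
    simpa [Matrix.trace, Matrix.diag, Matrix.mul_apply, Matrix.conjTranspose_apply] using h
  ext i j
  have hj := (Finset.sum_eq_zero_iff_of_nonneg
    (fun j _ => Finset.sum_nonneg fun i _ => mul_self_nonneg (M i j))).mp h2 j (Finset.mem_univ _)
  have hi := (Finset.sum_eq_zero_iff_of_nonneg
    (fun i _ => mul_self_nonneg (M i j))).mp hj i (Finset.mem_univ _)
  simpa [mul_self_eq_zero] using hi

lemma mul_eq_zero_of_trace {A B : Matrix n n ℝ} (hA : A.PosSemidef) (hB : B.PosSemidef)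
    (h : (A * B).trace = 0) : A * B = 0 := by
  obtain ⟨C, rfl⟩ : ∃ C : Matrix n n ℝ, A = Cᴴ * C := CStarAlgebra.nonneg_iff_eq_star_mul_self.mp hA.nonneg
  obtain ⟨D, rfl⟩ : ∃ D : Matrix n n ℝ, B = Dᴴ * D := CStarAlgebra.nonneg_iff_eq_star_mul_self.mp hB.nonneg
  have key : ((D * Cᴴ)ᴴ * (D * Cᴴ)).trace = (Cᴴ * C * (Dᴴ * D)).trace := by
    rw [show (D * Cᴴ)ᴴ * (D * Cᴴ) = (C * Dᴴ * D) * Cᴴ from by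
      simp [Matrix.conjTranspose_mul, Matrix.mul_assoc],
      Matrix.trace_mul_comm,
      show Cᴴ * (C * Dᴴ * D) = Cᴴ * C * (Dᴴ * D) from by simp [Matrix.mul_assoc]]
  have h0 : D * Cᴴ = 0 := by
    apply eq_zero_of_trace_ct_mul_self
    rw [key, h]
  have h1 : C * Dᴴ = 0 := by
    have := congrArg Matrix.conjTranspose h0
    simpa using this
  calc Cᴴ * C * (Dᴴ * D) = Cᴴ * (C * Dᴴ) * D := by simp [Matrix.mul_assoc]
    _ = 0 := by rw [h1]; simp

lemma idem {A : Matrix n n ℝ} (hA : A.PosSemidef) (htr : A.trace = 1) (hrk : A.rank = 1) :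
    A * A = A := by
  have hH := hA.1
  set μ := hH.eigenvalues with hμ
  set U : Matrix n n ℝ := (hH.eigenvectorUnitary : Matrix n n ℝ) with hUdef
  have hU1 : U * star U = 1 := Matrix.mem_unitaryGroup_iff.mp hH.eigenvectorUnitary.2
  have hU2 : star U * U = 1 := Matrix.mem_unitaryGroup_iff'.mp hH.eigenvectorUnitary.2
  have hid : (RCLike.ofReal ∘ μ : n → ℝ) = μ := by
    funext i; simp
  have hspec : A = U * Matrix.diagonal μ * star U := by
    have := hH.spectral_theorem
    rwa [hid] at this
  have hsum : ∑ i, μ i = 1 := by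
    have := congrArg Matrix.trace hspec
    rw [Matrix.trace_mul_cycle, hU2, Matrix.one_mul,
      Matrix.trace_diagonal, htr] at this
    exact this.symm
  have hnn : ∀ i, 0 ≤ μ i := hA.eigenvalues_nonneg
  have hcard : Fintype.card {i // μ i ≠ 0} = 1 := hH.rank_eq_card_non_zero_eigs.symm.trans hrk
  obtain ⟨a, ha⟩ := Fintype.card_eq_one_iff.mp hcard
  have hzero : ∀ i, i ≠ a.1 → μ i = 0 := by
    intro i hi
    by_contra h
    exact hi (congrArg Subtype.val (ha ⟨i, h⟩))
  have hone : μ a.1 = 1 := by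
    rw [Finset.sum_eq_single a.1 (fun b _ hb => hzero b hb)
      (fun hb => absurd (Finset.mem_univ _) hb)] at hsum
    exact hsum
  have hDD : Matrix.diagonal μ * Matrix.diagonal μ = Matrix.diagonal μ := by
    rw [Matrix.diagonal_mul_diagonal]
    refine congrArg Matrix.diagonal (funext fun i => ?_)
    by_cases h : i = a.1
    · subst h; rw [hone]; ring
    · rw [hzero i h]; ring
  have hcancel : ∀ X : Matrix n n ℝ, star U * (U * X) = X := fun X => by
    rw [← Matrix.mul_assoc, hU2, Matrix.one_mul]
  calc A * A = U * (Matrix.diagonal μ * (star U * (U * (Matrix.diagonal μ * star U)))) := by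
        rw [hspec]; simp only [Matrix.mul_assoc]
    _ = U * (Matrix.diagonal μ * Matrix.diagonal μ * star U) := by
        rw [hcancel]; simp only [Matrix.mul_assoc]
    _ = A := by rw [hDD, hspec, Matrix.mul_assoc]

lemma inner_eq_trace {A B : Matrix n n ℝ} (hB : B.IsHermitian) :
    ∑ i, ∑ j, A i j * B i j = (A * B).trace := by
  rw [Matrix.trace]
  refine Finset.sum_congr rfl fun i _ => ?_
  rw [Matrix.diag, Matrix.mul_apply]
  refine Finset.sum_congr rfl fun j _ => ?_
  congr 1
  have := congrFun (congrFun hB.eq i) j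
  simpa [Matrix.conjTranspose_apply] using this.symm

end Prop1Aux

/-- Proposition 1: for rank-one, trace-one PSD matrices `Y^1, …, Y^r`,
`∑ t, Y^t ⪯ I` iff the `Y^t` are pairwise orthogonal in the trace inner product. -/
theorem stmt0 (p r : ℕ) (hp : 1 ≤ p) (hr : 1 ≤ r)
    (Y : Fin r → Matrix (Fin p) (Fin p) ℝ)
    (hpsd : ∀ t, (Y t).PosSemidef)
    (htr : ∀ t, (Y t).trace = 1)
    (hrank : ∀ t, (Y t).rank = 1) :
    (1 - ∑ t, Y t).PosSemidef ↔
      ∀ t t', t ≠ t' → ∑ i, ∑ j, Y t i j * Y t' i j = 0 := by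
  classical
  set S : Matrix (Fin p) (Fin p) ℝ := ∑ t, Y t with hS
  have hSherm : Sᴴ = S := by
    rw [hS, Matrix.conjTranspose_sum]
    exact Finset.sum_congr rfl fun t _ => (hpsd t).1
  constructor
  · intro hPSD t t' htt'
    rw [Prop1Aux.inner_eq_trace (hpsd t').1]
    have hc : ∀ t'', 0 ≤ (Y t * Y t'').trace :=
      fun t'' => Prop1Aux.trace_mul_nonneg (hpsd t) (hpsd t'')
    have hle : (Y t * S).trace ≤ 1 := by
      have h0 : 0 ≤ (Y t * (1 - S)).trace := Prop1Aux.trace_mul_nonneg (hpsd t) hPSD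
      rw [Matrix.mul_sub, Matrix.mul_one, Matrix.trace_sub, htr t] at h0
      linarith
    have hself : (Y t * Y t).trace = 1 := by
      rw [Prop1Aux.idem (hpsd t) (htr t) (hrank t), htr t]
    have hsumtr : ∑ t'', (Y t * Y t'').trace = (Y t * S).trace := by
      rw [hS, Finset.mul_sum, Matrix.trace_sum]
    have hsplit : (Y t * Y t).trace + ∑ t'' ∈ Finset.univ.erase t, (Y t * Y t'').trace
        = ∑ t'', (Y t * Y t'').trace :=
      Finset.add_sum_erase Finset.univ (fun t'' => (Y t * Y t'').trace) (Finset.mem_univ t)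
    have hnn : 0 ≤ ∑ t'' ∈ Finset.univ.erase t, (Y t * Y t'').trace :=
      Finset.sum_nonneg fun x _ => hc x
    have hrest : ∑ t'' ∈ Finset.univ.erase t, (Y t * Y t'').trace = 0 := by
      rw [hself] at hsplit
      rw [hsumtr] at hsplit
      linarith
    exact (Finset.sum_eq_zero_iff_of_nonneg (fun x _ => hc x)).mp hrest t'
      (Finset.mem_erase.mpr ⟨htt'.symm, Finset.mem_univ _⟩)
  · intro h
    have hzero : ∀ t t', t ≠ t' → Y t * Y t' = 0 := by
      intro t t' htt'
      apply Prop1Aux.mul_eq_zero_of_trace (hpsd t) (hpsd t')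
      rw [← Prop1Aux.inner_eq_trace (hpsd t').1]
      exact h t t' htt'
    have hSS : S * S = S := by
      rw [hS, Finset.sum_mul_sum]
      refine Finset.sum_congr rfl fun t _ => ?_
      rw [Finset.sum_eq_single t (fun b _ hb => hzero t b (Ne.symm hb))
        (fun hb => absurd (Finset.mem_univ _) hb)]
      exact Prop1Aux.idem (hpsd t) (htr t) (hrank t)
    have hidem : (1 - S) * (1 - S) = 1 - S := by
      have h1 : (1 - S) * (1 - S) = 1 - S - S + S * S := by noncomm_ring
      rw [h1, hSS]
      abel
    have heq : (1 - S) = (1 - S)ᴴ * (1 - S) := by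
      conv_lhs => rw [← hidem]
      congr 1
      rw [Matrix.conjTranspose_sub, hSherm, Matrix.conjTranspose_one]
    rw [heq]
    exact Matrix.posSemidef_conjTranspose_mul_self _
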